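/- If P and Q are orthogonal projections on a finite-dimensional Hilbert space, onto subspaces N and K respectively, then dim(N ∩ K) ≤ Tr(PQ) ≤ min{dim N, dim K}, and Tr(PQ) = dim(N ∩ K) if and only if N ∩ (N∩K)^⊥ and K ∩ (N∩K)^⊥ are orthogonal subspaces. -/

import Mathlib

open BigOperators

noncomputable section


lemma trace_eq_sum_inner' {F : Type*} [NormedAddCommGroup F] [InnerProductSpace ℂ F]
    [FiniteDimensional ℂ F] {ι : Type*} [Fintype ι] [DecidableEq ι]
    (b : OrthonormalBasis ι ℂ F) (T : F →ₗ[ℂ] F) :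
    LinearMap.trace ℂ F T = ∑ i, (inner ℂ (b i) (T (b i)) : ℂ) := by
  rw [LinearMap.trace_eq_matrix_trace ℂ b.toBasis, Matrix.trace]
  congr 1
  ext i
  rw [Matrix.diag_apply, LinearMap.toMatrix_apply, b.coe_toBasis_repr_apply,
    b.repr_apply_apply, b.coe_toBasis]

lemma trace_PQ {E : Type*} [NormedAddCommGroup E] [InnerProductSpace ℂ E]
    [FiniteDimensional ℂ E] (N K : Submodule ℂ E) {ι : Type*} [Fintype ι] [DecidableEq ι]
    (q : OrthonormalBasis ι ℂ K) :
    LinearMap.trace ℂ E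
      ((N.subtype ∘ₗ (N.orthogonalProjectionOnto).toLinearMap) ∘ₗ
        (K.subtype ∘ₗ (K.orthogonalProjectionOnto).toLinearMap)) =
      ((∑ i, ‖(N.orthogonalProjectionOnto (q i : E) : E)‖ ^ 2 : ℝ) : ℂ) := by
  have h1 : (N.subtype ∘ₗ (N.orthogonalProjectionOnto).toLinearMap) ∘ₗ
        (K.subtype ∘ₗ (K.orthogonalProjectionOnto).toLinearMap)
      = ((N.subtype ∘ₗ (N.orthogonalProjectionOnto).toLinearMap) ∘ₗ K.subtype) ∘ₗ
        (K.orthogonalProjectionOnto).toLinearMap := by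
    simp [LinearMap.comp_assoc]
  rw [h1, LinearMap.trace_comp_comm', trace_eq_sum_inner' q]
  push_cast
  congr 1
  ext i
  simp only [LinearMap.comp_apply, ContinuousLinearMap.coe_coe, Submodule.coe_subtype,
    Function.comp_apply]
  rw [Submodule.inner_orthogonalProjectionOnto_eq_of_mem_left]
  set p : E := (N.orthogonalProjectionOnto (q i : E) : E) with hp
  have hsa : (inner ℂ ((q i : E)) p : ℂ) = inner ℂ p p := by
    have h0 : (inner ℂ ((q i : E) - p) p : ℂ) = 0 :=
      Submodule.starProjection_inner_eq_zero _ _ (N.orthogonalProjectionOnto (q i : E)).2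
    rw [inner_sub_left, sub_eq_zero] at h0
    exact h0
  rw [hsa, inner_self_eq_norm_sq_to_K]
  norm_cast

-- upper bound helper
lemma trace_PQ_re_le {E : Type*} [NormedAddCommGroup E] [InnerProductSpace ℂ E]
    [FiniteDimensional ℂ E] (N K : Submodule ℂ E) :
    (LinearMap.trace ℂ E
      ((N.subtype ∘ₗ (N.orthogonalProjectionOnto).toLinearMap) ∘ₗ
        (K.subtype ∘ₗ (K.orthogonalProjectionOnto).toLinearMap))).re ≤
      (Module.finrank ℂ K : ℝ) := by
  classical
  rw [trace_PQ N K (stdOrthonormalBasis ℂ K), Complex.ofReal_re]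
  calc ∑ i, ‖(N.orthogonalProjectionOnto ((stdOrthonormalBasis ℂ K) i : E) : E)‖ ^ 2
      ≤ ∑ _i : Fin (Module.finrank ℂ K), (1 : ℝ) := by
        apply Finset.sum_le_sum
        intro i _
        have hn : ‖((stdOrthonormalBasis ℂ K) i : E)‖ = 1 := by
          rw [Submodule.norm_coe]
          exact (stdOrthonormalBasis ℂ K).orthonormal.1 i
        have h2 : ‖(N.orthogonalProjectionOnto ((stdOrthonormalBasis ℂ K) i : E) : E)‖ ≤ 1 := by
          rw [Submodule.norm_coe]
          calc ‖N.orthogonalProjectionOnto ((stdOrthonormalBasis ℂ K) i : E)‖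
              ≤ ‖N.orthogonalProjectionOnto‖ * ‖((stdOrthonormalBasis ℂ K) i : E)‖ :=
                (N.orthogonalProjectionOnto).le_opNorm _
            _ ≤ 1 * 1 := by
                apply mul_le_mul (Submodule.orthogonalProjectionOnto_norm_le N) (le_of_eq hn)
                  (norm_nonneg _) zero_le_one
            _ = 1 := one_mul 1
        calc ‖(N.orthogonalProjectionOnto ((stdOrthonormalBasis ℂ K) i : E) : E)‖ ^ 2
            ≤ 1 ^ 2 := by apply pow_le_pow_left₀ (norm_nonneg _) h2
          _ = 1 := one_pow 2
    _ = (Module.finrank ℂ K : ℝ) := by simp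

/-- for orthogonal projections `P`, `Q` onto subspaces `N`, `K`
of a finite-dimensional (complex) Hilbert space,
`dim(N ∩ K) ≤ Tr(PQ) ≤ min(dim N, dim K)`, with `Tr(PQ) = dim(N ∩ K)` iff
`N ∩ (N ∩ K)^⊥` and `K ∩ (N ∩ K)^⊥` are orthogonal. -/
theorem stmt16 {E : Type*} [NormedAddCommGroup E] [InnerProductSpace ℂ E]
    [FiniteDimensional ℂ E] (N K : Submodule ℂ E) :
    (LinearMap.trace ℂ E
      ((N.subtype ∘ₗ (N.orthogonalProjectionOnto).toLinearMap) ∘ₗ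
        (K.subtype ∘ₗ (K.orthogonalProjectionOnto).toLinearMap))).im = 0 ∧
    ((Module.finrank ℂ (N ⊓ K : Submodule ℂ E) : ℝ) ≤
      (LinearMap.trace ℂ E
        ((N.subtype ∘ₗ (N.orthogonalProjectionOnto).toLinearMap) ∘ₗ
          (K.subtype ∘ₗ (K.orthogonalProjectionOnto).toLinearMap))).re) ∧
    ((LinearMap.trace ℂ E
        ((N.subtype ∘ₗ (N.orthogonalProjectionOnto).toLinearMap) ∘ₗ
          (K.subtype ∘ₗ (K.orthogonalProjectionOnto).toLinearMap))).re ≤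
      ((min (Module.finrank ℂ N) (Module.finrank ℂ K) : ℕ) : ℝ)) ∧
    ((LinearMap.trace ℂ E
        ((N.subtype ∘ₗ (N.orthogonalProjectionOnto).toLinearMap) ∘ₗ
          (K.subtype ∘ₗ (K.orthogonalProjectionOnto).toLinearMap)) =
        (Module.finrank ℂ (N ⊓ K : Submodule ℂ E) : ℂ)) ↔
      (∀ x ∈ N ⊓ (N ⊓ K)ᗮ, ∀ y ∈ K ⊓ (N ⊓ K)ᗮ, (inner ℂ x y : ℂ) = 0)) := by
  classical
  set M : Submodule ℂ E := N ⊓ K with hM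
  have hMN : M ≤ N := inf_le_left
  have hMK : M ≤ K := inf_le_right
  -- adapted orthonormal basis of K extending a basis of M
  set M'' : Submodule ℂ K := M.comap K.subtype with hM''def
  have hmM : Module.finrank ℂ M'' = Module.finrank ℂ M :=
    (Submodule.comapSubtypeEquivOfLe hMK).finrank_eq
  set c := stdOrthonormalBasis ℂ M'' with hc
  set v : Fin (Module.finrank ℂ M'') → K := fun i => ((c i : M'') : K) with hvdef
  have hv_on : Orthonormal ℂ v := c.orthonormal.comp_linearIsometry M''.subtypeₗᵢ
  have hv_inj : Function.Injective v := hv_on.linearIndependent.injective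
  have hs_on : Orthonormal ℂ ((↑) : Set.range v → K) :=
    (orthonormal_subtype_range hv_inj).mpr hv_on
  obtain ⟨u, b, hsu, hb⟩ := hs_on.exists_orthonormalBasis_extension
  set t : Finset K := Finset.image v Finset.univ with htdef
  have hmemt : ∀ e : K, e ∈ t ↔ ∃ i, v i = e := by
    intro e; simp [htdef]
  have htu : t ⊆ u := by
    intro e he
    rcases (hmemt e).1 he with ⟨i, rfl⟩
    exact hsu ⟨i, rfl⟩
  have htcard : t.card = Module.finrank ℂ M := by
    rw [htdef, Finset.card_image_of_injective _ hv_inj, Finset.card_univ, Fintype.card_fin, hmM]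
  have h_mem_M : ∀ e ∈ t, (e : E) ∈ M := by
    intro e he
    rcases (hmemt e).1 he with ⟨i, rfl⟩
    have h2 := (c i).2
    simpa using Submodule.mem_comap.1 h2
  have h_orth : ∀ e ∈ u, e ∉ t → (e : E) ∈ Mᗮ := by
    intro e heu het
    rw [Submodule.mem_orthogonal]
    intro z hz
    have hzK : z ∈ K := hMK hz
    have hz'' : (⟨z, hzK⟩ : K) ∈ M'' := by
      rw [hM''def, Submodule.mem_comap]; simpa using hz
    have hinner : (inner ℂ z (e : E) : ℂ) = inner ℂ (⟨z, hzK⟩ : K) e := rfl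
    rw [hinner]
    set z' : M'' := ⟨⟨z, hzK⟩, hz''⟩ with hz'
    have hrep : (⟨z, hzK⟩ : K) = ∑ i, c.repr z' i • v i := by
      have h0 := congrArg (fun w : M'' => (w : K)) (c.sum_repr z')
      simp only at h0
      have h0' : (⟨z, hzK⟩ : K) = ((∑ x, c.repr z' x • c x : M'') : K) := h0.symm
      rw [h0']
      push_cast
      rfl
    rw [hrep, sum_inner]
    apply Finset.sum_eq_zero
    intro i _
    rw [inner_smul_left]
    have hvu : v i ∈ u := hsu ⟨i, rfl⟩
    have hne : (⟨v i, hvu⟩ : u) ≠ (⟨e, heu⟩ : u) := by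
      intro hcontra
      exact het ((hmemt e).2 ⟨i, congrArg Subtype.val hcontra⟩)
    have h0 := b.orthonormal.2 hne
    rw [hb] at h0
    simp only [h0, mul_zero]
  -- trace over the adapted basis
  have hkey : LinearMap.trace ℂ E
      ((N.subtype ∘ₗ (N.orthogonalProjectionOnto).toLinearMap) ∘ₗ
        (K.subtype ∘ₗ (K.orthogonalProjectionOnto).toLinearMap)) =
      ((∑ e ∈ u, ‖(N.orthogonalProjectionOnto (e : E) : E)‖ ^ 2 : ℝ) : ℂ) := by
    rw [trace_PQ N K b]
    norm_cast
    rw [hb]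
    exact Finset.sum_coe_sort u (fun e => ‖N.orthogonalProjectionOnto (e : E)‖ ^ 2)
  set B : ℝ := ∑ e ∈ u \ t, ‖(N.orthogonalProjectionOnto (e : E) : E)‖ ^ 2 with hBdef
  have hBnn : 0 ≤ B := Finset.sum_nonneg fun e _ => sq_nonneg _
  have hone : ∀ e ∈ t, ‖(N.orthogonalProjectionOnto (e : E) : E)‖ ^ 2 = 1 := by
    intro e he
    have heM : (e : E) ∈ M := h_mem_M e he
    have hself : (N.orthogonalProjectionOnto (e : E) : E) = (e : E) :=
      Submodule.starProjection_eq_self_iff.2 (hMN heM)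
    have hnorm : ‖e‖ = 1 := by
      have h1 := b.orthonormal.1 ⟨e, htu he⟩
      rwa [hb] at h1
    rw [hself, Submodule.norm_coe, hnorm, one_pow]
  have hsplit : (∑ e ∈ u, ‖(N.orthogonalProjectionOnto (e : E) : E)‖ ^ 2 : ℝ)
      = (Module.finrank ℂ M : ℝ) + B := by
    rw [← Finset.sum_sdiff htu, add_comm]
    congr 1
    rw [Finset.sum_congr rfl hone, Finset.sum_const, nsmul_eq_mul, mul_one, htcard]
  have hT : LinearMap.trace ℂ E
      ((N.subtype ∘ₗ (N.orthogonalProjectionOnto).toLinearMap) ∘ₗ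
        (K.subtype ∘ₗ (K.orthogonalProjectionOnto).toLinearMap)) =
      (((Module.finrank ℂ M : ℝ) + B : ℝ) : ℂ) := by rw [hkey, hsplit]
  refine ⟨?_, ?_, ?_, ?_⟩
  · rw [hT]; exact Complex.ofReal_im _
  · rw [hT, Complex.ofReal_re]; exact le_add_of_nonneg_right hBnn
  · have h1 := trace_PQ_re_le N K
    have h2 : (LinearMap.trace ℂ E
        ((N.subtype ∘ₗ (N.orthogonalProjectionOnto).toLinearMap) ∘ₗ
          (K.subtype ∘ₗ (K.orthogonalProjectionOnto).toLinearMap))).re ≤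
        (Module.finrank ℂ N : ℝ) := by
      have hcomm : LinearMap.trace ℂ E
          ((N.subtype ∘ₗ (N.orthogonalProjectionOnto).toLinearMap) ∘ₗ
            (K.subtype ∘ₗ (K.orthogonalProjectionOnto).toLinearMap)) =
          LinearMap.trace ℂ E
          ((K.subtype ∘ₗ (K.orthogonalProjectionOnto).toLinearMap) ∘ₗ
            (N.subtype ∘ₗ (N.orthogonalProjectionOnto).toLinearMap)) := by
        have h3 := LinearMap.trace_mul_comm ℂ
          (N.subtype ∘ₗ (N.orthogonalProjectionOnto).toLinearMap)
          (K.subtype ∘ₗ (K.orthogonalProjectionOnto).toLinearMap)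
        simpa [Module.End.mul_eq_comp] using h3
      rw [hcomm]
      exact trace_PQ_re_le K N
    rw [Nat.cast_min]
    exact le_min h2 h1
  · constructor
    · intro heq x hx y hy
      have hBr : ((Module.finrank ℂ M : ℝ) + B : ℝ) = (Module.finrank ℂ M : ℝ) := by
        have h' := hT.symm.trans heq
        exact_mod_cast h'
      have hB0 : B = 0 := by linarith
      have hzero : ∀ e ∈ u \ t, (e : E) ∈ Nᗮ := by
        intro e he
        have h0 : ‖(N.orthogonalProjectionOnto (e : E) : E)‖ ^ 2 = 0 :=
          (Finset.sum_eq_zero_iff_of_nonneg (fun e _ => sq_nonneg _)).1 hB0 e he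
        have h1 : (N.orthogonalProjectionOnto (e : E) : E) = 0 := by
          have := pow_eq_zero_iff (n := 2) (by norm_num) |>.1 h0
          simpa using this
        have hproj : N.orthogonalProjectionOnto (e : E) = 0 := by
          exact_mod_cast h1
        exact Submodule.orthogonalProjectionOnto_eq_zero_iff.1 hproj
      have hyK : y ∈ K := (Submodule.mem_inf.1 hy).1
      have hyMperp : y ∈ Mᗮ := (Submodule.mem_inf.1 hy).2
      set y' : K := ⟨y, hyK⟩ with hy'
      have h2 : y = ∑ i : u, b.repr y' i • ((b i : K) : E) := by
        have h3 := congrArg (fun w : K => (w : E)) (b.sum_repr y')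
        simp only at h3
        have h3' : y = ((∑ x, b.repr y' x • b x : K) : E) := h3.symm
        rw [h3']
        push_cast
        rfl
      have hyN : y ∈ Nᗮ := by
        rw [h2]
        apply Submodule.sum_mem
        intro i _
        by_cases hit : (i : K) ∈ t
        · have hc0 : b.repr y' i = 0 := by
            rw [b.repr_apply_apply, hb, Submodule.coe_inner]
            exact Submodule.inner_right_of_mem_orthogonal (h_mem_M _ hit) hyMperp
          rw [hc0, zero_smul]
          exact Submodule.zero_mem _
        · apply Submodule.smul_mem
          have h4 : ((i : K) : E) ∈ Nᗮ := hzero ↑i (Finset.mem_sdiff.2 ⟨i.2, hit⟩)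
          have h5 : b i = (i : K) := by rw [hb]
          rw [h5]
          exact h4
      exact Submodule.inner_right_of_mem_orthogonal (Submodule.mem_inf.1 hx).1 hyN
    · intro hΦ
      have hzero : ∀ e ∈ u \ t, ‖(N.orthogonalProjectionOnto (e : E) : E)‖ ^ 2 = 0 := by
        intro e he
        rcases Finset.mem_sdiff.1 he with ⟨heu, het⟩
        have heMperp : (e : E) ∈ Mᗮ := h_orth e heu het
        have heN : (e : E) ∈ Nᗮ := by
          rw [Submodule.mem_orthogonal]
          intro x hx
          have h1 : (inner ℂ (↑(M.orthogonalProjectionOnto x) : E) ((e : K) : E) : ℂ) = 0 :=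
            Submodule.inner_right_of_mem_orthogonal (M.orthogonalProjectionOnto x).2 heMperp
          have hx1 : x - ↑(M.orthogonalProjectionOnto x) ∈ N :=
            N.sub_mem hx (hMN (M.orthogonalProjectionOnto x).2)
          have hx2 : x - ↑(M.orthogonalProjectionOnto x) ∈ Mᗮ :=
            Submodule.sub_starProjection_mem_orthogonal x
          have h2 := hΦ _ (Submodule.mem_inf.2 ⟨hx1, hx2⟩) _
            (Submodule.mem_inf.2 ⟨e.2, heMperp⟩)
          have hsum : (inner ℂ x ((e : K) : E) : ℂ) =
              inner ℂ (↑(M.orthogonalProjectionOnto x) : E) ((e : K) : E)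
              + inner ℂ (x - ↑(M.orthogonalProjectionOnto x)) ((e : K) : E) := by
            rw [← inner_add_left, add_sub_cancel]
          rw [hsum, h1, h2, add_zero]
        have hproj : N.orthogonalProjectionOnto (e : E) = 0 :=
          Submodule.orthogonalProjectionOnto_eq_zero_iff.2 heN
        rw [hproj]
        simp
      have hB0 : B = 0 := Finset.sum_eq_zero hzero
      rw [hT, hB0, add_zero]
      norm_cast
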